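/- arXiv:1603.06210 — 2 statements merged into one kernel-verified Lean document; each statement's English description precedes it below -/
import Mathlib

section
/- Let 1 < p < ∞, let K be a compact operator on L^p(ℝ), let t ∈ ℝ and m ∈ ℕ. Then ‖P_m ∘ U_{−t} ∘ Z_n ∘ K ∘ Z_n^{−1} ∘ U_t‖ → 0 and ‖U_{−t} ∘ Z_n ∘ K ∘ Z_n^{−1} ∘ U_t ∘ P_m‖ → 0 as n → ∞, in the operator norm on L^p(ℝ). -/
open MeasureTheory Filter Topology
open scoped ENNReal

noncomputable section

/-- The space `L^p(ℝ)` of complex-valued `p`-integrable functions on `ℝ`, `p` real. -/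
abbrev LpSp (p : ℝ) := Lp ℂ (ENNReal.ofReal p) (volume : Measure ℝ)

/-- Bounded operators on `L^p(ℝ)`. -/
abbrev OpSp (p : ℝ) [Fact (1 ≤ ENNReal.ofReal p)] := LpSp p →L[ℂ] LpSp p

/-- `M` is the operator of multiplication by the function `a` on `L^p(ℝ)`. -/
def IsMulOp (p : ℝ) [Fact (1 ≤ ENNReal.ofReal p)] (a : ℝ → ℂ) (M : OpSp p) : Prop :=
  ∀ u : LpSp p, (M u : ℝ → ℂ) =ᵐ[volume] fun x => a x * (u : ℝ → ℂ) x

/-- `Z` is the dilation `(Z_n u)(x) = n^{-1/p} u(x/n)` on `L^p(ℝ)`. -/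
def IsZOp (p : ℝ) [Fact (1 ≤ ENNReal.ofReal p)] (n : ℕ) (Z : OpSp p) : Prop :=
  ∀ u : LpSp p, (Z u : ℝ → ℂ) =ᵐ[volume]
    fun x => (((n : ℝ) ^ (-1 / p) : ℝ) : ℂ) * (u : ℝ → ℂ) (x / n)

/-- `Zi` is the inverse dilation `(Z_n^{-1} u)(x) = n^{1/p} u(n x)` on `L^p(ℝ)`. -/
def IsZInvOp (p : ℝ) [Fact (1 ≤ ENNReal.ofReal p)] (n : ℕ) (Zi : OpSp p) : Prop :=
  ∀ u : LpSp p, (Zi u : ℝ → ℂ) =ᵐ[volume]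
    fun x => (((n : ℝ) ^ (1 / p) : ℝ) : ℂ) * (u : ℝ → ℂ) (n * x)

/-- `U` is the modulation `(U_t u)(x) = e^{itx} u(x)` on `L^p(ℝ)`. -/
def IsUOp (p : ℝ) [Fact (1 ≤ ENNReal.ofReal p)] (t : ℝ) (U : OpSp p) : Prop :=
  ∀ u : LpSp p, (U u : ℝ → ℂ) =ᵐ[volume]
    fun x => Complex.exp (Complex.I * (t : ℂ) * (x : ℂ)) * (u : ℝ → ℂ) x

namespace Stmt8Aux
open Set



variable {p : ℝ}

/-- scaling of eLpNorm under `x ↦ a * x`. -/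
lemma eLpNorm_comp_mul_left (hp : 1 < p) (f : ℝ → ℂ) {a : ℝ} (ha : a ≠ 0) :
    eLpNorm (fun x => f (a * x)) (ENNReal.ofReal p) volume
      = ENNReal.ofReal |a⁻¹| ^ (1 / p) * eLpNorm f (ENNReal.ofReal p) volume := by
  have h0 : 0 < p := lt_trans one_pos hp
  have hme : MeasurableEmbedding (fun x : ℝ => a * x) := by
    have := (Homeomorph.mulLeft₀ a ha).measurableEmbedding
    simpa [Homeomorph.coe_mulLeft₀] using this
  have h1 : (fun x => f (a * x)) = f ∘ (fun x : ℝ => a * x) := rfl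
  have hc : ENNReal.ofReal |a⁻¹| ≠ 0 :=
    (ENNReal.ofReal_pos.mpr (abs_pos.mpr (inv_ne_zero ha))).ne'
  rw [h1, ← hme.eLpNorm_map_measure, Real.map_volume_mul_left ha,
    eLpNorm_smul_measure_of_ne_zero hc, smul_eq_mul]
  congr 2
  rw [ENNReal.toReal_div, ENNReal.toReal_one, ENNReal.toReal_ofReal h0.le]

lemma cancel₁ {n : ℕ} (hp : 1 < p) (hn : 1 ≤ n) :
    ENNReal.ofReal ((n : ℝ) ^ (-1 / p)) * ENNReal.ofReal ((n : ℝ)) ^ (1 / p) = 1 := by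
  have h0 : 0 < p := lt_trans one_pos hp
  have hnpos : (0:ℝ) < n := by exact_mod_cast hn
  rw [ENNReal.ofReal_rpow_of_pos hnpos, ← ENNReal.ofReal_mul (Real.rpow_nonneg hnpos.le _),
    ← Real.rpow_add hnpos]
  have h : -1 / p + 1 / p = 0 := by ring
  rw [h, Real.rpow_zero, ENNReal.ofReal_one]

lemma cancel₂ {n : ℕ} (hp : 1 < p) (hn : 1 ≤ n) :
    ENNReal.ofReal ((n : ℝ) ^ (1 / p)) * ENNReal.ofReal ((n : ℝ)⁻¹) ^ (1 / p) = 1 := by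
  have h0 : 0 < p := lt_trans one_pos hp
  have hnpos : (0:ℝ) < n := by exact_mod_cast hn
  rw [ENNReal.ofReal_rpow_of_pos (inv_pos.mpr hnpos),
    ← ENNReal.ofReal_mul (Real.rpow_nonneg hnpos.le _),
    Real.inv_rpow hnpos.le, ← Real.rpow_neg hnpos.le, ← Real.rpow_add hnpos]
  have h : 1 / p + -(1 / p) = 0 := by ring
  rw [h, Real.rpow_zero, ENNReal.ofReal_one]

lemma norm_exp_I (s x : ℝ) : ‖Complex.exp (Complex.I * (s:ℂ) * (x:ℂ))‖ = 1 := by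
  rw [Complex.norm_exp]
  simp [Complex.mul_re]


def Iset (m n : ℕ) : Set ℝ := Set.Icc (-((m:ℝ)/n)) ((m:ℝ)/n)

lemma measurableSet_Iset (m n : ℕ) : MeasurableSet (Iset m n) := measurableSet_Icc

lemma mem_Icc_iff_scale {m n : ℕ} (hn : 1 ≤ n) (x : ℝ) :
    x ∈ Set.Icc (-(m:ℝ)) (m:ℝ) ↔ (n:ℝ)⁻¹ * x ∈ Iset m n := by
  have hnpos : (0:ℝ) < n := by exact_mod_cast hn
  have hinv : (0:ℝ) < ((n:ℝ))⁻¹ := inv_pos.mpr hnpos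
  simp only [Iset, Set.mem_Icc, ← abs_le]
  rw [abs_mul, abs_inv, abs_of_pos hnpos, ← div_eq_inv_mul, div_le_div_iff_of_pos_right hnpos]

lemma Iset_antitone {m : ℕ} {a b : ℕ} (ha : 1 ≤ a) (hab : a ≤ b) : Iset m b ⊆ Iset m a := by
  have hapos : (0:ℝ) < a := by exact_mod_cast ha
  have h : (m:ℝ)/b ≤ (m:ℝ)/a :=
    div_le_div_of_nonneg_left (by positivity) hapos (by exact_mod_cast hab)
  exact Set.Icc_subset_Icc (neg_le_neg h) h

/-- Lemma A : truncation to shrinking intervals tends to zero in `L^p`. -/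
lemma tendsto_eLpNorm_indicator (hp : 1 < p) (m : ℕ) (f : ℝ → ℂ)
    (hf : AEStronglyMeasurable f volume)
    (hfin : eLpNorm f (ENNReal.ofReal p) volume ≠ ∞) :
    Tendsto (fun n : ℕ => eLpNorm ((Iset m n).indicator f) (ENNReal.ofReal p) volume)
      atTop (𝓝 0) := by
  have h0 : 0 < p := lt_trans one_pos hp
  set q := ENNReal.ofReal p with hq
  have hq0 : q ≠ 0 := by simp only [hq, Ne, ENNReal.ofReal_eq_zero, not_le]; linarith
  have hqt : q ≠ ∞ := ENNReal.ofReal_ne_top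
  have htr : q.toReal = p := ENNReal.toReal_ofReal h0.le
  obtain ⟨g, hgm, hfg⟩ := hf
  set D : ℝ → ℝ≥0∞ := fun x => (‖g x‖₊ : ℝ≥0∞) ^ p with hD
  have hDmeas : Measurable D := hgm.measurable.nnnorm.coe_nnreal_ennreal.pow_const p
  have key : ∀ n : ℕ, eLpNorm ((Iset m n).indicator f) q volume
      = (∫⁻ x, (Iset m n).indicator D x ∂volume) ^ (1/p) := by
    intro n
    have hind : (Iset m n).indicator f =ᵐ[volume] (Iset m n).indicator g := by
      filter_upwards [hfg] with x hx
      by_cases h : x ∈ Iset m n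
      · rw [Set.indicator_of_mem h, Set.indicator_of_mem h, hx]
      · rw [Set.indicator_of_notMem h, Set.indicator_of_notMem h]
    rw [eLpNorm_congr_ae hind, eLpNorm_eq_lintegral_rpow_enorm_toReal hq0 hqt, htr]
    congr 1
    refine lintegral_congr fun x => ?_
    by_cases hx : x ∈ Iset m n
    · rw [Set.indicator_of_mem hx, Set.indicator_of_mem hx]; rfl
    · rw [Set.indicator_of_notMem hx, Set.indicator_of_notMem hx]
      simp [ENNReal.zero_rpow_of_pos h0]
  have hDfin : ∫⁻ x, D x ∂volume ≠ ∞ := by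
    have hEq : ∫⁻ x, D x ∂volume = (eLpNorm g q volume) ^ p := by
      rw [eLpNorm_eq_lintegral_rpow_enorm_toReal hq0 hqt, htr, ← ENNReal.rpow_mul, one_div,
        inv_mul_cancel₀ h0.ne', ENNReal.rpow_one]; rfl
    rw [hEq]
    exact (ENNReal.rpow_lt_top_of_nonneg h0.le
      (by rw [← eLpNorm_congr_ae hfg]; exact hfin)).ne
  have hφ : Tendsto (fun n : ℕ => ∫⁻ x, (Iset m n).indicator D x ∂volume) atTop (𝓝 0) := by
    have h00 : (0:ℝ≥0∞) = ∫⁻ (_ : ℝ), 0 ∂volume := by simp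
    rw [h00]
    apply tendsto_lintegral_of_dominated_convergence D
      (fun n => hDmeas.indicator (measurableSet_Iset m n))
      (fun n => Filter.Eventually.of_forall fun x => Set.indicator_le_self _ _ x) hDfin
    have h0set : ∀ᵐ (x:ℝ) ∂volume, x ≠ 0 := by
      rw [ae_iff]
      have : {x : ℝ | ¬ x ≠ 0} = {0} := by ext; simp
      rw [this]; exact measure_singleton 0
    filter_upwards [h0set] with x hx
    have hev : ∀ᶠ n : ℕ in atTop, (Iset m n).indicator D x = 0 := by
      obtain ⟨N, hN⟩ := exists_nat_gt ((m:ℝ)/|x|)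
      have hxpos : 0 < |x| := abs_pos.mpr hx
      filter_upwards [eventually_ge_atTop (max N 1)] with n hn
      apply Set.indicator_of_notMem
      intro hmem
      have h1 : |x| ≤ (m:ℝ)/n := abs_le.mpr ⟨hmem.1, hmem.2⟩
      have hn1 : (1:ℝ) ≤ n := by exact_mod_cast le_trans (le_max_right N 1) hn
      have hnn : (N:ℝ) ≤ n := by exact_mod_cast le_trans (le_max_left N 1) hn
      have hlt : (m:ℝ) / n < |x| := by
        rw [div_lt_iff₀ (by linarith : (0:ℝ) < (n:ℝ))]
        calc (m:ℝ) = (m/|x|) * |x| := by field_simp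
        _ < N * |x| := mul_lt_mul_of_pos_right hN hxpos
        _ ≤ |x| * n := by nlinarith
      exact absurd h1 (not_le.mpr hlt)
    exact Tendsto.congr' (hev.mono fun n h => h.symm) tendsto_const_nhds
  have hfinal : Tendsto (fun n : ℕ => (∫⁻ x, (Iset m n).indicator D x ∂volume) ^ (1/p))
      atTop (𝓝 ((0:ℝ≥0∞) ^ (1/p))) := (ENNReal.continuous_rpow_const.tendsto 0).comp hφ
  rw [ENNReal.zero_rpow_of_pos (by positivity)] at hfinal
  simpa only [key] using hfinal


lemma eLpNorm_const_mul (c : ℂ) (f : ℝ → ℂ) (q : ℝ≥0∞) :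
    eLpNorm (fun x => c * f x) q volume = (‖c‖₊ : ℝ≥0∞) * eLpNorm f q volume := by
  simpa [Pi.smul_def, smul_eq_mul, enorm_eq_nnnorm] using
    eLpNorm_const_smul (μ := (volume : Measure ℝ)) (p := q) c f

set_option linter.unusedSectionVars false
variable [Fact (1 ≤ ENNReal.ofReal p)]

lemma norm_le_norm_of_eLpNorm_le {u v : LpSp p}
    (h : eLpNorm (⇑u) (ENNReal.ofReal p) volume ≤ eLpNorm (⇑v) (ENNReal.ofReal p) volume) :
    ‖u‖ ≤ ‖v‖ := by
  rw [Lp.norm_def, Lp.norm_def]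
  exact ENNReal.toReal_mono (Lp.eLpNorm_ne_top v) h

/-- T2 : `‖U_s Z_n v‖ ≤ ‖v‖`. -/
lemma norm_U_Z_le (hp : 1 < p) {n : ℕ} (hn : 1 ≤ n) {s : ℝ}
    {Zn Us : OpSp p} (hZn : IsZOp p n Zn) (hUs : IsUOp p s Us) (v : LpSp p) :
    ‖Us (Zn v)‖ ≤ ‖v‖ := by
  have h0 : 0 < p := lt_trans one_pos hp
  have hnR : (0:ℝ) < n := by exact_mod_cast hn
  apply norm_le_norm_of_eLpNorm_le
  set c : ℂ := (((n : ℝ) ^ (-1 / p) : ℝ) : ℂ) with hc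
  calc eLpNorm (⇑(Us (Zn v))) (ENNReal.ofReal p) volume
      ≤ eLpNorm (fun x => c * (⇑v) ((n:ℝ)⁻¹ * x)) (ENNReal.ofReal p) volume := by
        apply eLpNorm_mono_ae
        filter_upwards [hUs (Zn v), hZn v] with x h1 h2
        rw [h1, norm_mul, norm_exp_I, one_mul, h2, show x / (n:ℝ) = (n:ℝ)⁻¹ * x from div_eq_inv_mul x (n:ℝ)]
    _ = (‖c‖₊ : ℝ≥0∞) * eLpNorm (fun x => (⇑v) ((n:ℝ)⁻¹ * x)) (ENNReal.ofReal p) volume :=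
        eLpNorm_const_mul c _ _
    _ = eLpNorm (⇑v) (ENNReal.ofReal p) volume := by
        rw [eLpNorm_comp_mul_left hp (⇑v) (inv_ne_zero hnR.ne'), inv_inv,
          abs_of_pos hnR, ← mul_assoc]
        have hnorm : (‖c‖₊ : ℝ≥0∞) = ENNReal.ofReal ((n:ℝ) ^ (-1 / p)) := by
          rw [← enorm_eq_nnnorm, ← ofReal_norm, hc, Complex.norm_real, Real.norm_eq_abs,
            abs_of_nonneg (Real.rpow_nonneg hnR.le _)]
        rw [hnorm, cancel₁ hp hn, one_mul]

/-- T3 : `‖Zi_n U_s w‖ ≤ ‖w‖`. -/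
lemma norm_Zi_U_le (hp : 1 < p) {n : ℕ} (hn : 1 ≤ n) {s : ℝ}
    {Zin Us : OpSp p} (hZin : IsZInvOp p n Zin) (hUs : IsUOp p s Us) (w : LpSp p) :
    ‖Zin (Us w)‖ ≤ ‖w‖ := by
  have h0 : 0 < p := lt_trans one_pos hp
  have hnR : (0:ℝ) < n := by exact_mod_cast hn
  apply norm_le_norm_of_eLpNorm_le
  set c : ℂ := (((n : ℝ) ^ (1 / p) : ℝ) : ℂ) with hc
  have hcomp : (fun x : ℝ => (⇑(Us w)) ((n:ℝ) * x)) =ᵐ[volume]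
      (fun x : ℝ => Complex.exp (Complex.I * (s:ℂ) * (((n:ℝ) * x : ℝ):ℂ)) * (⇑w) ((n:ℝ) * x)) := by
    have hqmp : Measure.QuasiMeasurePreserving (fun x : ℝ => (n:ℝ) * x) volume volume := by
      refine ⟨measurable_const_mul _, ?_⟩
      rw [show (fun x : ℝ => (n:ℝ) * x) = ((n:ℝ) * ·) from rfl, Real.map_volume_mul_left hnR.ne']
      intro sset hs
      simp [hs]
    exact hqmp.ae_eq_comp (hUs w)
  calc eLpNorm (⇑(Zin (Us w))) (ENNReal.ofReal p) volume
      ≤ eLpNorm (fun x => c * (⇑w) ((n:ℝ) * x)) (ENNReal.ofReal p) volume := by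
        apply eLpNorm_mono_ae
        filter_upwards [hZin (Us w), hcomp] with x h1 h2
        rw [h1, norm_mul, h2, norm_mul, norm_exp_I, one_mul, ← norm_mul]
    _ = (‖c‖₊ : ℝ≥0∞) * eLpNorm (fun x => (⇑w) ((n:ℝ) * x)) (ENNReal.ofReal p) volume :=
        eLpNorm_const_mul c _ _
    _ = eLpNorm (⇑w) (ENNReal.ofReal p) volume := by
        rw [eLpNorm_comp_mul_left hp (⇑w) hnR.ne', abs_of_pos (inv_pos.mpr hnR), ← mul_assoc]
        have hnorm : (‖c‖₊ : ℝ≥0∞) = ENNReal.ofReal ((n:ℝ) ^ (1 / p)) := by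
          rw [← enorm_eq_nnnorm, ← ofReal_norm, hc, Complex.norm_real, Real.norm_eq_abs,
            abs_of_nonneg (Real.rpow_nonneg hnR.le _)]
        rw [hnorm, cancel₂ hp hn, one_mul]

/-- T5 : `‖P_m u‖ ≤ ‖u‖`. -/
lemma norm_P_le {m : ℕ} {Pm : OpSp p}
    (hPm : IsMulOp p (Set.indicator (Set.Icc (-(m : ℝ)) (m : ℝ)) fun _ => (1 : ℂ)) Pm)
    (u : LpSp p) : ‖Pm u‖ ≤ ‖u‖ := by
  apply norm_le_norm_of_eLpNorm_le
  apply eLpNorm_mono_ae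
  filter_upwards [hPm u] with x h1
  rw [h1, norm_mul]
  by_cases hx : x ∈ Set.Icc (-(m:ℝ)) (m:ℝ)
  · rw [Set.indicator_of_mem hx]; simp
  · rw [Set.indicator_of_notMem hx]; simp [norm_nonneg]


lemma qmp_mul {a : ℝ} (ha : a ≠ 0) :
    Measure.QuasiMeasurePreserving (fun x : ℝ => a * x) volume volume := by
  refine ⟨measurable_const_mul _, ?_⟩
  rw [show (fun x : ℝ => a * x) = (a * ·) from rfl, Real.map_volume_mul_left ha]
  intro s hs
  simp [hs]

/-- T1 : `eLpNorm (P_m U_s Z_n v) ≤ eLpNorm (χ_{I_n} v)`. -/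
lemma eLpNorm_P_U_Z_le (hp : 1 < p) {m n : ℕ} (hn : 1 ≤ n) {s : ℝ} {Pm Us Zn : OpSp p}
    (hPm : IsMulOp p (Set.indicator (Set.Icc (-(m : ℝ)) (m : ℝ)) fun _ => (1 : ℂ)) Pm)
    (hUs : IsUOp p s Us) (hZn : IsZOp p n Zn) (v : LpSp p) :
    eLpNorm (⇑(Pm (Us (Zn v)))) (ENNReal.ofReal p) volume
      ≤ eLpNorm ((Iset m n).indicator (⇑v)) (ENNReal.ofReal p) volume := by
  have h0 : 0 < p := lt_trans one_pos hp
  have hnR : (0:ℝ) < n := by exact_mod_cast hn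
  set c : ℂ := (((n : ℝ) ^ (-1 / p) : ℝ) : ℂ) with hc
  set g : ℝ → ℂ := (Iset m n).indicator (fun y => c * (⇑v) y) with hg
  calc eLpNorm (⇑(Pm (Us (Zn v)))) (ENNReal.ofReal p) volume
      ≤ eLpNorm (fun x => g ((n:ℝ)⁻¹ * x)) (ENNReal.ofReal p) volume := by
        apply eLpNorm_mono_ae
        filter_upwards [hPm (Us (Zn v)), hUs (Zn v), hZn v] with x h1 h2 h3
        by_cases hx : x ∈ Set.Icc (-(m:ℝ)) (m:ℝ)
        · have e1 : (Set.indicator (Set.Icc (-(m:ℝ)) (m:ℝ)) (fun _ => (1:ℂ))) x = 1 :=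
            Set.indicator_of_mem hx _
          rw [h1, e1, one_mul, h2, h3, hg,
            Set.indicator_of_mem ((mem_Icc_iff_scale hn x).mp hx), norm_mul, norm_exp_I,
            one_mul, show x / (n:ℝ) = (n:ℝ)⁻¹ * x from div_eq_inv_mul x (n:ℝ)]
        · have e1 : (Set.indicator (Set.Icc (-(m:ℝ)) (m:ℝ)) (fun _ => (1:ℂ))) x = 0 :=
            Set.indicator_of_notMem hx _
          have e2 : ((n:ℝ)⁻¹ * x) ∉ Iset m n := fun h => hx ((mem_Icc_iff_scale hn x).mpr h)
          rw [h1, e1, zero_mul, hg, Set.indicator_of_notMem e2]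
    _ = ENNReal.ofReal ((n:ℝ)) ^ (1/p) * eLpNorm g (ENNReal.ofReal p) volume := by
        rw [eLpNorm_comp_mul_left hp g (inv_ne_zero hnR.ne'), inv_inv, abs_of_pos hnR]
    _ = eLpNorm ((Iset m n).indicator (⇑v)) (ENNReal.ofReal p) volume := by
        have hgid : g = fun y => c * ((Iset m n).indicator (⇑v) y) := by
          funext y
          by_cases hy : y ∈ Iset m n
          · rw [hg, Set.indicator_of_mem hy, Set.indicator_of_mem hy]
          · rw [hg, Set.indicator_of_notMem hy, Set.indicator_of_notMem hy, mul_zero]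
        rw [hgid, eLpNorm_const_mul, ← mul_assoc]
        have hnorm : (‖c‖₊ : ℝ≥0∞) = ENNReal.ofReal ((n:ℝ) ^ (-1 / p)) := by
          rw [← enorm_eq_nnnorm, ← ofReal_norm, hc, Complex.norm_real, Real.norm_eq_abs,
            abs_of_nonneg (Real.rpow_nonneg hnR.le _)]
        rw [hnorm, mul_comm (ENNReal.ofReal ((n:ℝ)) ^ (1/p)), cancel₁ hp hn, one_mul]

/-- T4 : `Zi_n U_s P_m u` is supported in `I_n`. -/
lemma support_Zi_U_P (hp : 1 < p) {m n : ℕ} (hn : 1 ≤ n) {s : ℝ} {Zin Us Pm : OpSp p}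
    (hZin : IsZInvOp p n Zin) (hUs : IsUOp p s Us)
    (hPm : IsMulOp p (Set.indicator (Set.Icc (-(m : ℝ)) (m : ℝ)) fun _ => (1 : ℂ)) Pm)
    (u : LpSp p) :
    (⇑(Zin (Us (Pm u))) : ℝ → ℂ) =ᵐ[volume] (Iset m n).indicator (⇑(Zin (Us (Pm u)))) := by
  have hnR : (0:ℝ) < n := by exact_mod_cast hn
  have h2 := hZin (Us (Pm u))
  have h1 := (qmp_mul hnR.ne').ae_eq_comp (hUs (Pm u))
  have h0 := (qmp_mul hnR.ne').ae_eq_comp (hPm u)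
  filter_upwards [h2, h1, h0] with x k2 k1 k0
  by_cases hx : x ∈ Iset m n
  · rw [Set.indicator_of_mem hx]
  · rw [Set.indicator_of_notMem hx, k2]
    simp only [Function.comp_apply] at k1 k0
    rw [k1, k0]
    have e2 : ((n:ℝ) * x) ∉ Set.Icc (-(m:ℝ)) (m:ℝ) := by
      intro h
      apply hx
      have := (mem_Icc_iff_scale hn ((n:ℝ) * x)).mp h
      rwa [inv_mul_cancel_left₀ hnR.ne'] at this
    rw [Set.indicator_of_notMem e2, zero_mul, mul_zero, mul_zero]


lemma opNorm_le_of_unit {T : OpSp p} {c : ℝ} (hc : 0 ≤ c)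
    (h : ∀ u : LpSp p, ‖u‖ ≤ 1 → ‖T u‖ ≤ c) : ‖T‖ ≤ c := by
  apply T.opNorm_le_bound' hc
  intro x hx
  have hxpos : 0 < ‖x‖ := (norm_nonneg x).lt_of_ne' hx
  have h1 : ‖(((‖x‖ : ℝ)⁻¹ : ℝ) : ℂ) • x‖ = 1 := by
    rw [norm_smul, Complex.norm_real, Real.norm_eq_abs,
      abs_of_nonneg (inv_nonneg.mpr hxpos.le), inv_mul_cancel₀ hxpos.ne']
  have h2 := h _ (le_of_eq h1)
  rw [T.map_smul, norm_smul, Complex.norm_real, Real.norm_eq_abs,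
    abs_of_nonneg (inv_nonneg.mpr hxpos.le)] at h2
  calc ‖T x‖ = ‖x‖ * (‖x‖⁻¹ * ‖T x‖) := by field_simp
  _ ≤ ‖x‖ * c := mul_le_mul_of_nonneg_left h2 hxpos.le
  _ = c * ‖x‖ := mul_comm _ _

lemma part1_core (hp : 1 < p) (K : OpSp p) (hK : IsCompactOperator (⇑K)) (m : ℕ)
    {ε : ℝ} (hε : 0 < ε) :
    ∀ᶠ n : ℕ in atTop, ∀ w : LpSp p, ‖w‖ ≤ 1 →
      eLpNorm ((Iset m n).indicator (⇑(K w))) (ENNReal.ofReal p) volume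
        ≤ ENNReal.ofReal ε := by
  have htb : TotallyBounded (⇑K '' Metric.closedBall 0 1) :=
    (hK.isCompact_closure_image_closedBall 1).totallyBounded.subset subset_closure
  obtain ⟨t, htfin, htsub⟩ := (Metric.totallyBounded_iff).mp htb (ε/2) (by linarith)
  have hev : ∀ᶠ n : ℕ in atTop, ∀ y ∈ t,
      eLpNorm ((Iset m n).indicator (⇑y)) (ENNReal.ofReal p) volume
        ≤ ENNReal.ofReal (ε/2) := by
    rw [eventually_all_finite htfin]
    intro y hy
    have htend := tendsto_eLpNorm_indicator hp m (⇑y) (Lp.aestronglyMeasurable y)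
      (Lp.eLpNorm_ne_top y)
    exact (htend.eventually_lt_const (ENNReal.ofReal_pos.mpr (by linarith))).mono
      fun n hn => hn.le
  filter_upwards [hev] with n hn w hw
  have hKw : K w ∈ ⇑K '' Metric.closedBall 0 1 :=
    ⟨w, by simpa [Metric.mem_closedBall, dist_zero_right] using hw, rfl⟩
  obtain ⟨y, hyt, hyb⟩ := Set.mem_iUnion₂.mp (htsub hKw)
  have hdist : ‖(K w : LpSp p) - y‖ < ε/2 := by
    rw [← dist_eq_norm]; exact Metric.mem_ball.mp hyb
  have hsplit : (Iset m n).indicator (⇑(K w)) =ᵐ[volume]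
      (Iset m n).indicator (⇑(K w - y)) + (Iset m n).indicator (⇑y) := by
    filter_upwards [Lp.coeFn_sub (K w) y] with x hx
    by_cases hmem : x ∈ Iset m n
    · simp only [Pi.add_apply, Set.indicator_of_mem hmem, hx, Pi.sub_apply]; ring
    · simp only [Pi.add_apply, Set.indicator_of_notMem hmem, add_zero]
  have hKwy : eLpNorm (⇑(K w - y)) (ENNReal.ofReal p) volume = ENNReal.ofReal ‖K w - y‖ := by
    rw [Lp.norm_def, ENNReal.ofReal_toReal (Lp.eLpNorm_ne_top _)]
  calc eLpNorm ((Iset m n).indicator (⇑(K w))) (ENNReal.ofReal p) volume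
      = eLpNorm ((Iset m n).indicator (⇑(K w - y)) + (Iset m n).indicator (⇑y))
          (ENNReal.ofReal p) volume := eLpNorm_congr_ae hsplit
    _ ≤ eLpNorm ((Iset m n).indicator (⇑(K w - y))) (ENNReal.ofReal p) volume
          + eLpNorm ((Iset m n).indicator (⇑y)) (ENNReal.ofReal p) volume :=
        eLpNorm_add_le ((Lp.aestronglyMeasurable _).indicator (measurableSet_Iset m n))
          ((Lp.aestronglyMeasurable _).indicator (measurableSet_Iset m n)) Fact.out
    _ ≤ ENNReal.ofReal (ε/2) + ENNReal.ofReal (ε/2) := by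
        refine add_le_add ?_ (hn y hyt)
        refine le_trans (eLpNorm_indicator_le _) ?_
        rw [hKwy]
        exact ENNReal.ofReal_le_ofReal hdist.le
    _ = ENNReal.ofReal ε := by
        rw [← ENNReal.ofReal_add (by linarith) (by linarith)]
        norm_num

lemma part1 (hp : 1 < p) (K : OpSp p) (hK : IsCompactOperator (⇑K)) (t : ℝ) (m : ℕ)
    (P : ℕ → OpSp p)
    (hP : ∀ k : ℕ, IsMulOp p (Set.indicator (Set.Icc (-(k : ℝ)) (k : ℝ)) fun _ => (1 : ℂ)) (P k))
    (Z Zi : ℕ → OpSp p)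
    (hZ : ∀ n : ℕ, 1 ≤ n → IsZOp p n (Z n)) (hZi : ∀ n : ℕ, 1 ≤ n → IsZInvOp p n (Zi n))
    (U : ℝ → OpSp p) (hU : ∀ s : ℝ, IsUOp p s (U s)) :
    Tendsto (fun n : ℕ => ‖P m * U (-t) * Z n * K * Zi n * U t‖) atTop (𝓝 0) := by
  rw [NormedAddCommGroup.tendsto_nhds_zero]
  intro ε hε
  filter_upwards [part1_core hp K hK m (half_pos hε), eventually_ge_atTop 1] with n hcore hn
  rw [Real.norm_eq_abs, abs_of_nonneg (norm_nonneg _)]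
  refine lt_of_le_of_lt (opNorm_le_of_unit (le_of_lt (half_pos hε)) ?_) (half_lt_self hε)
  intro u hu
  have happ : (P m * U (-t) * Z n * K * Zi n * U t) u
      = (P m) ((U (-t)) ((Z n) (K ((Zi n) ((U t) u))))) := rfl
  rw [happ]
  set w := (Zi n) ((U t) u) with hw
  have hwnorm : ‖w‖ ≤ 1 := le_trans (norm_Zi_U_le hp hn (hZi n hn) (hU t) u) hu
  have h1 := eLpNorm_P_U_Z_le hp hn (hP m) (hU (-t)) (hZ n hn) (K w)
  rw [Lp.norm_def]
  calc (eLpNorm (⇑((P m) ((U (-t)) ((Z n) (K w))))) (ENNReal.ofReal p) volume).toReal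
      ≤ (ENNReal.ofReal (ε/2)).toReal :=
        ENNReal.toReal_mono ENNReal.ofReal_ne_top (le_trans h1 (hcore w hwnorm))
    _ = ε/2 := ENNReal.toReal_ofReal (le_of_lt (half_pos hε))


lemma eLpNorm_sum_indicator_le (hp : 1 < p) {N : ℕ} (E : ℕ → Set ℝ)
    (hEm : ∀ i, MeasurableSet (E i)) (f : ℕ → ℝ → ℂ)
    (hmeas : ∀ i, AEStronglyMeasurable (f i) volume)
    (hdisj : ∀ i j, i ≠ j → Disjoint (E i) (E j))
    (hle : ∀ i, eLpNorm ((E i).indicator (f i)) (ENNReal.ofReal p) volume ≤ 1) :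
    eLpNorm (∑ i ∈ Finset.range N, (E i).indicator (f i)) (ENNReal.ofReal p) volume
      ≤ (N : ℝ≥0∞) ^ (1/p) := by
  have h0 : 0 < p := lt_trans one_pos hp
  have hq0 : ENNReal.ofReal p ≠ 0 := by simp only [Ne, ENNReal.ofReal_eq_zero, not_le]; linarith
  have hqt : ENNReal.ofReal p ≠ ∞ := ENNReal.ofReal_ne_top
  have htr : (ENNReal.ofReal p).toReal = p := ENNReal.toReal_ofReal h0.le
  have hmeas' : ∀ i, AEStronglyMeasurable ((E i).indicator (f i)) volume :=
    fun i => (hmeas i).indicator (hEm i)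
  rw [eLpNorm_eq_lintegral_rpow_enorm_toReal hq0 hqt, htr]
  have hpoint : ∀ x : ℝ, (‖(∑ i ∈ Finset.range N, (E i).indicator (f i)) x‖₊ : ℝ≥0∞) ^ p
      ≤ ∑ i ∈ Finset.range N, (‖(E i).indicator (f i) x‖₊ : ℝ≥0∞) ^ p := by
    intro x
    by_cases hex : ∃ j ∈ Finset.range N, x ∈ E j
    · obtain ⟨j, hj, hxj⟩ := hex
      have hz : ∀ i ∈ Finset.range N, i ≠ j → (E i).indicator (f i) x = 0 := fun i _ hij =>
        Set.indicator_of_notMem (fun hxi => Set.disjoint_left.mp (hdisj i j hij) hxi hxj) _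
      rw [Finset.sum_apply, Finset.sum_eq_single_of_mem j hj hz]
      exact Finset.single_le_sum (f := fun i => (‖(E i).indicator (f i) x‖₊ : ℝ≥0∞) ^ p)
        (fun i _ => zero_le) hj
    · push_neg at hex
      have hzz : ∀ i ∈ Finset.range N, (E i).indicator (f i) x = 0 := fun i hi =>
        Set.indicator_of_notMem (hex i hi) _
      rw [Finset.sum_apply, Finset.sum_eq_zero hzz]
      simp [ENNReal.zero_rpow_of_pos h0]
  calc (∫⁻ x, (‖(∑ i ∈ Finset.range N, (E i).indicator (f i)) x‖₊ : ℝ≥0∞) ^ p ∂volume) ^ (1/p)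
      ≤ (∫⁻ x, ∑ i ∈ Finset.range N,
          (‖(E i).indicator (f i) x‖₊ : ℝ≥0∞) ^ p ∂volume) ^ (1/p) :=
        ENNReal.rpow_le_rpow (lintegral_mono hpoint) (by positivity)
    _ = (∑ i ∈ Finset.range N,
          ∫⁻ x, (‖(E i).indicator (f i) x‖₊ : ℝ≥0∞) ^ p ∂volume) ^ (1/p) := by
        rw [lintegral_finset_sum' (f := fun i x => (‖(E i).indicator (f i) x‖₊ : ℝ≥0∞) ^ p) _ fun i _ => ((hmeas' i).enorm).pow_const p]
    _ ≤ (∑ _i ∈ Finset.range N, (1:ℝ≥0∞)) ^ (1/p) := by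
        refine ENNReal.rpow_le_rpow (Finset.sum_le_sum fun i _ => ?_) (by positivity)
        have hi := hle i
        rw [eLpNorm_eq_lintegral_rpow_enorm_toReal hq0 hqt, htr] at hi
        calc ∫⁻ x, (‖(E i).indicator (f i) x‖₊ : ℝ≥0∞) ^ p ∂volume
            = ((∫⁻ x, (‖(E i).indicator (f i) x‖₊ : ℝ≥0∞) ^ p ∂volume) ^ (1/p)) ^ p := by
              rw [← ENNReal.rpow_mul, one_div, inv_mul_cancel₀ h0.ne', ENNReal.rpow_one]
          _ ≤ 1 ^ p := ENNReal.rpow_le_rpow hi h0.le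
          _ = 1 := ENNReal.one_rpow p
    _ = (N : ℝ≥0∞) ^ (1/p) := by simp

lemma coeFn_sum (s : Finset ℕ) (f : ℕ → LpSp p) :
    (⇑(∑ i ∈ s, f i) : ℝ → ℂ) =ᵐ[volume] ∑ i ∈ s, (⇑(f i) : ℝ → ℂ) := by
  classical
  induction s using Finset.induction_on with
  | empty =>
      simp only [Finset.sum_empty]
      exact Lp.coeFn_zero ℂ _ _
  | @insert a s ha ih =>
      rw [Finset.sum_insert ha, Finset.sum_insert ha]
      filter_upwards [Lp.coeFn_add (f a) (∑ i ∈ s, f i), ih] with x h1 h2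
      rw [Pi.add_apply] at h1 ⊢
      rw [h1, h2]


set_option maxHeartbeats 2000000 in
lemma part2_core (hp : 1 < p) (K : OpSp p) (hK : IsCompactOperator (⇑K)) (m : ℕ)
    {ε : ℝ} (hε : 0 < ε) :
    ∀ᶠ n : ℕ in atTop, ∀ w : LpSp p, ‖w‖ ≤ 1 →
      ((⇑w : ℝ → ℂ) =ᵐ[volume] (Iset m n).indicator (⇑w)) → ‖K w‖ ≤ ε := by
  have h0 : 0 < p := lt_trans one_pos hp
  by_contra hcon
  rw [Filter.not_eventually] at hcon
  classical
  set Q : ℕ → Prop := fun n => ∃ w : LpSp p, ‖w‖ ≤ 1 ∧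
      ((⇑w : ℝ → ℂ) =ᵐ[volume] (Iset m n).indicator (⇑w)) ∧ ε < ‖K w‖ with hQ
  have hfreq : ∃ᶠ n in atTop, Q n ∧ 1 ≤ n := by
    refine Filter.Frequently.and_eventually (hcon.mono fun n hn => ?_) (eventually_ge_atTop 1)
    push_neg at hn
    obtain ⟨w, hw1, hw2, hw3⟩ := hn
    exact ⟨w, hw1, hw2, hw3⟩
  set w : ℕ → LpSp p := fun n => if h : Q n then h.choose else 0 with hwdef
  have hwspec : ∀ n, Q n → ‖w n‖ ≤ 1 ∧
      ((⇑(w n) : ℝ → ℂ) =ᵐ[volume] (Iset m n).indicator (⇑(w n))) ∧ ε < ‖K (w n)‖ := by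
    intro n hn
    simp only [hwdef, dif_pos hn]
    exact hn.choose_spec
  have htb : TotallyBounded (⇑K '' Metric.closedBall 0 1) :=
    (hK.isCompact_closure_image_closedBall 1).totallyBounded.subset subset_closure
  obtain ⟨t, htfin, htsub⟩ := (Metric.totallyBounded_iff).mp htb (ε/8) (by linarith)
  have hmem : ∀ n, Q n → K (w n) ∈ ⇑K '' Metric.closedBall 0 1 := fun n hn =>
    ⟨w n, by simpa [Metric.mem_closedBall, dist_zero_right] using (hwspec n hn).1, rfl⟩
  have hy0 : ∃ y₀ ∈ t, ∃ᶠ n in atTop, (Q n ∧ 1 ≤ n) ∧ K (w n) ∈ Metric.ball y₀ (ε/8) := by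
    by_contra hy
    push_neg at hy
    have hall : ∀ᶠ n in atTop, ∀ y ∈ t,
        ¬ ((Q n ∧ 1 ≤ n) ∧ K (w n) ∈ Metric.ball y (ε/8)) := by
      rw [eventually_all_finite htfin]
      intro y hy'
      have hne := hy y hy'
      exact hne.mono fun x hx h => hx h.1 h.2
    obtain ⟨n, hn1, hn2⟩ := (hfreq.and_eventually hall).exists
    obtain ⟨y, hyt, hyb⟩ := Set.mem_iUnion₂.mp (htsub (hmem n hn1.1))
    exact hn2 y hyt ⟨hn1, hyb⟩
  obtain ⟨y₀, hy₀t, hy₀freq⟩ := hy0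
  have hstep : ∀ (k : ℕ) (c : ℕ), ∃ n : ℕ,
      (((Q n ∧ 1 ≤ n) ∧ K (w n) ∈ Metric.ball y₀ (ε/8))
      ∧ c < n ∧ eLpNorm ((Iset m n).indicator (⇑(w c))) (ENNReal.ofReal p) volume
          ≤ ENNReal.ofReal ((1/2) ^ (k+1))) := by
    intro k c
    have hev1 : ∀ᶠ n : ℕ in atTop, c < n := eventually_gt_atTop c
    have hev2 : ∀ᶠ n : ℕ in atTop,
        eLpNorm ((Iset m n).indicator (⇑(w c))) (ENNReal.ofReal p) volume
          ≤ ENNReal.ofReal ((1/2) ^ (k+1)) := by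
      have htend := tendsto_eLpNorm_indicator hp m (⇑(w c)) (Lp.aestronglyMeasurable _)
        (Lp.eLpNorm_ne_top _)
      exact (htend.eventually_lt_const (ENNReal.ofReal_pos.mpr (by positivity))).mono
        fun n hn => hn.le
    obtain ⟨n, hn1, hn2⟩ := (hy₀freq.and_eventually (hev1.and hev2)).exists
    exact ⟨n, hn1, hn2⟩
  set g : ℕ → ℕ :=
    fun k => Nat.rec (hy₀freq.exists.choose) (fun k ih => (hstep k ih).choose) k with hgdef
  have hg0 : (Q (g 0) ∧ 1 ≤ g 0) ∧ K (w (g 0)) ∈ Metric.ball y₀ (ε/8) :=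
    hy₀freq.exists.choose_spec
  have hgsucc : ∀ k : ℕ, (((Q (g (k+1)) ∧ 1 ≤ g (k+1))
      ∧ K (w (g (k+1))) ∈ Metric.ball y₀ (ε/8))
      ∧ g k < g (k+1)
      ∧ eLpNorm ((Iset m (g (k+1))).indicator (⇑(w (g k)))) (ENNReal.ofReal p) volume
          ≤ ENNReal.ofReal ((1/2) ^ (k+1))) := fun k => (hstep k (g k)).choose_spec
  have hgQ : ∀ k, (Q (g k) ∧ 1 ≤ g k) ∧ K (w (g k)) ∈ Metric.ball y₀ (ε/8) := by
    intro k
    cases k with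
    | zero => exact hg0
    | succ k => exact (hgsucc k).1
  have hgmono : StrictMono g := strictMono_nat_of_lt_succ fun k => (hgsucc k).2.1
  have hy₀norm : 7*ε/8 ≤ ‖y₀‖ := by
    have h1 := (hgQ 0).1.1
    have h2 := (hwspec _ h1).2.2
    have h3 : ‖K (w (g 0)) - y₀‖ < ε/8 := by
      rw [← dist_eq_norm]; exact Metric.mem_ball.mp (hgQ 0).2
    have h4 := norm_sub_norm_le (K (w (g 0))) y₀
    linarith
  have hmain : ∀ N : ℕ, 3*ε/4 * N ≤ ‖K‖ * ((N:ℝ) ^ (1/p) + 1) := by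
    intro N
    set s : LpSp p := ∑ i ∈ Finset.range N, w (g i) with hs
    have hlow : 3*ε/4 * N ≤ ‖K s‖ := by
      have hKs : K s = ∑ i ∈ Finset.range N, K (w (g i)) := map_sum K _ _
      have hdiff : ‖(∑ _i ∈ Finset.range N, y₀) - K s‖ ≤ N * (ε/8) := by
        rw [hKs, ← Finset.sum_sub_distrib]
        refine le_trans (norm_sum_le _ _) ?_
        rw [show (N:ℝ) * (ε/8) = ∑ _i ∈ Finset.range N, (ε/8) by
          rw [Finset.sum_const, Finset.card_range, nsmul_eq_mul]]
        refine Finset.sum_le_sum fun i _ => ?_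
        have hb : ‖K (w (g i)) - y₀‖ < ε/8 := by
          rw [← dist_eq_norm]; exact Metric.mem_ball.mp (hgQ i).2
        rw [norm_sub_rev]
        exact hb.le
      have hsum_y : ‖∑ _i ∈ Finset.range N, y₀‖ = N * ‖y₀‖ := by
        rw [Finset.sum_const, Finset.card_range, RCLike.norm_nsmul ℂ, nsmul_eq_mul]
      have htri : ‖∑ _i ∈ Finset.range N, y₀‖
          ≤ ‖K s‖ + ‖(∑ _i ∈ Finset.range N, y₀) - K s‖ := by
        calc ‖∑ _i ∈ Finset.range N, y₀‖
            = ‖K s + ((∑ _i ∈ Finset.range N, y₀) - K s)‖ := by rw [add_sub_cancel]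
          _ ≤ ‖K s‖ + ‖(∑ _i ∈ Finset.range N, y₀) - K s‖ := norm_add_le _ _
      have hN0 : (0:ℝ) ≤ N := Nat.cast_nonneg N
      nlinarith
    have hsnorm : ‖s‖ ≤ (N:ℝ) ^ (1/p) + 1 := by
      set E : ℕ → Set ℝ := fun i => Iset m (g i) \ Iset m (g (i+1)) with hE
      have hEm : ∀ i, MeasurableSet (E i) :=
        fun i => (measurableSet_Iset _ _).diff (measurableSet_Iset _ _)
      have hEdisj : ∀ i j, i ≠ j → Disjoint (E i) (E j) := by
        have key : ∀ i j, i < j → Disjoint (E i) (E j) := by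
          intro i j hij
          have hsub : E j ⊆ Iset m (g (i+1)) := fun x hx =>
            Iset_antitone (hgQ (i+1)).1.2 (hgmono.monotone hij) hx.1
          exact Set.disjoint_left.mpr fun x hxi hxj => hxi.2 (hsub hxj)
        intro i j hij
        rcases lt_or_gt_of_ne hij with h | h
        · exact key i j h
        · exact (key j i h).symm
      have hwsupp : ∀ i, (⇑(w (g i)) : ℝ → ℂ)
          =ᵐ[volume] (Iset m (g i)).indicator (⇑(w (g i))) :=
        fun i => (hwspec _ (hgQ i).1.1).2.1
      have hdecomp : (⇑s : ℝ → ℂ) =ᵐ[volume]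
          (∑ i ∈ Finset.range N, (E i).indicator (⇑(w (g i))))
          + (∑ i ∈ Finset.range N, (Iset m (g (i+1))).indicator (⇑(w (g i)))) := by
        have hcoe := coeFn_sum (Finset.range N) (fun i => w (g i))
        have hsupp_all : ∀ᵐ x ∂volume, ∀ i ∈ Finset.range N,
            ⇑(w (g i)) x = (Iset m (g i)).indicator (⇑(w (g i))) x := by
          rw [eventually_all_finset]
          intro i _
          exact hwsupp i
        filter_upwards [hcoe, hsupp_all] with x hx hall
        rw [hx, Pi.add_apply, Finset.sum_apply, Finset.sum_apply, Finset.sum_apply,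
          ← Finset.sum_add_distrib]
        refine Finset.sum_congr rfl fun i hi => ?_
        rw [hall i hi]
        have hsub : Iset m (g (i+1)) ⊆ Iset m (g i) :=
          Iset_antitone (hgQ i).1.2 (hgmono.monotone (Nat.le_succ i))
        by_cases hx1 : x ∈ Iset m (g (i+1))
        · rw [Set.indicator_of_mem (hsub hx1), Set.indicator_of_notMem (fun h => h.2 hx1),
            Set.indicator_of_mem hx1, zero_add]
        · by_cases hx2 : x ∈ Iset m (g i)
          · have hmemE : x ∈ E i := Set.mem_diff_of_mem hx2 hx1
            rw [Set.indicator_of_mem hx2, Set.indicator_of_mem hmemE,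
              Set.indicator_of_notMem hx1, add_zero]
          · rw [Set.indicator_of_notMem hx2, Set.indicator_of_notMem (fun h => hx2 h.1),
              Set.indicator_of_notMem hx1, add_zero]
      have hwle : ∀ i, eLpNorm (⇑(w (g i))) (ENNReal.ofReal p) volume ≤ 1 := by
        intro i
        have h1 := (hwspec _ (hgQ i).1.1).1
        have h2 : eLpNorm (⇑(w (g i))) (ENNReal.ofReal p) volume
            = ENNReal.ofReal ‖w (g i)‖ := by
          rw [Lp.norm_def, ENNReal.ofReal_toReal (Lp.eLpNorm_ne_top _)]
        rw [h2, ← ENNReal.ofReal_one]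
        exact ENNReal.ofReal_le_ofReal h1
      have hbound : eLpNorm (⇑s) (ENNReal.ofReal p) volume ≤ (N:ℝ≥0∞) ^ (1/p) + 1 := by
        rw [eLpNorm_congr_ae hdecomp]
        refine le_trans (eLpNorm_add_le
          (Finset.aestronglyMeasurable_sum _ fun i _ =>
            (Lp.aestronglyMeasurable _).indicator (hEm i))
          (Finset.aestronglyMeasurable_sum _ fun i _ =>
            (Lp.aestronglyMeasurable _).indicator (measurableSet_Iset _ _))
          Fact.out) (add_le_add ?_ ?_)
        · refine eLpNorm_sum_indicator_le hp E hEm _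
            (fun i => Lp.aestronglyMeasurable _) hEdisj (fun i => ?_)
          exact le_trans (eLpNorm_indicator_le _) (hwle i)
        · calc eLpNorm (∑ i ∈ Finset.range N,
                (Iset m (g (i+1))).indicator (⇑(w (g i)))) (ENNReal.ofReal p) volume
              ≤ ∑ i ∈ Finset.range N, eLpNorm ((Iset m (g (i+1))).indicator (⇑(w (g i))))
                  (ENNReal.ofReal p) volume :=
                eLpNorm_sum_le (fun i _ =>
                  (Lp.aestronglyMeasurable _).indicator (measurableSet_Iset _ _)) Fact.out
            _ ≤ ∑ i ∈ Finset.range N, ENNReal.ofReal ((1/2) ^ (i+1)) :=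
                Finset.sum_le_sum fun i _ => (hgsucc i).2.2
            _ = ENNReal.ofReal (∑ i ∈ Finset.range N, (1/2:ℝ) ^ (i+1)) :=
                (ENNReal.ofReal_sum_of_nonneg fun i _ => by positivity).symm
            _ ≤ 1 := by
                rw [← ENNReal.ofReal_one]
                apply ENNReal.ofReal_le_ofReal
                have hgeo : ∑ i ∈ Finset.range N, (1/2:ℝ) ^ (i+1)
                    = (1/2) * ∑ i ∈ Finset.range N, (1/2:ℝ) ^ i := by
                  rw [Finset.mul_sum]
                  exact Finset.sum_congr rfl fun i _ => by ring
                rw [hgeo]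
                have := sum_geometric_two_le N
                linarith
      rw [Lp.norm_def]
      have hfin : (N:ℝ≥0∞) ^ (1/p) + 1 ≠ ∞ := by
        apply ENNReal.add_ne_top.mpr
        constructor
        · exact (ENNReal.rpow_lt_top_of_nonneg (by positivity) (ENNReal.natCast_ne_top N)).ne
        · exact ENNReal.one_ne_top
      calc (eLpNorm (⇑s) (ENNReal.ofReal p) volume).toReal
          ≤ ((N:ℝ≥0∞) ^ (1/p) + 1).toReal := ENNReal.toReal_mono hfin hbound
        _ = (N:ℝ) ^ (1/p) + 1 := by
            rw [ENNReal.toReal_add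
              (ENNReal.rpow_lt_top_of_nonneg (by positivity) (ENNReal.natCast_ne_top N)).ne
              ENNReal.one_ne_top, ENNReal.toReal_one, ← ENNReal.toReal_rpow,
              ENNReal.toReal_natCast]
    calc 3*ε/4 * N ≤ ‖K s‖ := hlow
      _ ≤ ‖K‖ * ‖s‖ := K.le_opNorm s
      _ ≤ ‖K‖ * ((N:ℝ) ^ (1/p) + 1) := mul_le_mul_of_nonneg_left hsnorm (norm_nonneg K)
  -- final contradiction
  have hc : 0 < 1 - 1/p := by
    have : 1/p < 1 := by
      rw [div_lt_one h0]; exact hp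
    linarith
  set C : ℝ := (8*‖K‖)/(3*ε) + 1 with hC
  have htendN : Tendsto (fun N : ℕ => ((N:ℝ)) ^ (1 - 1/p)) atTop atTop :=
    (tendsto_rpow_atTop hc).comp tendsto_natCast_atTop_atTop
  obtain ⟨N, hNC, hN1⟩ := ((htendN.eventually_gt_atTop C).and (eventually_ge_atTop 1)).exists
  have hNpos : (0:ℝ) < N := by exact_mod_cast hN1
  have hNR1 : (1:ℝ) ≤ N := by exact_mod_cast hN1
  set a : ℝ := (N:ℝ) ^ (1/p) with ha
  set b : ℝ := (N:ℝ) ^ (1 - 1/p) with hb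
  have hapos : 0 < a := Real.rpow_pos_of_pos hNpos _
  have ha1 : 1 ≤ a := Real.one_le_rpow hNR1 (by positivity)
  have hab : a * b = N := by
    rw [ha, hb, ← Real.rpow_add hNpos]
    norm_num
  have hKnn : (0:ℝ) ≤ ‖K‖ := norm_nonneg _
  have hmainN := hmain N
  have h2a : ‖K‖ * (a + 1) ≤ 2*‖K‖*a := by nlinarith
  have key : 3*ε/4 * (a*b) ≤ 2*‖K‖*a := by
    rw [hab]
    exact le_trans hmainN h2a
  have hbineq : 3*ε/4 * b ≤ 2*‖K‖ := by nlinarith [key, hapos, mul_pos hapos hapos]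
  have hCb : C < b := hNC
  rw [hC] at hCb
  have : 3*ε/4 * ((8*‖K‖)/(3*ε) + 1) < 3*ε/4 * b := by
    apply mul_lt_mul_of_pos_left hCb
    linarith
  have hval : 3*ε/4 * ((8*‖K‖)/(3*ε) + 1) = 2*‖K‖ + 3*ε/4 := by
    field_simp
    ring
  nlinarith


lemma part2 (hp : 1 < p) (K : OpSp p) (hK : IsCompactOperator (⇑K)) (t : ℝ) (m : ℕ)
    (P : ℕ → OpSp p)
    (hP : ∀ k : ℕ, IsMulOp p (Set.indicator (Set.Icc (-(k : ℝ)) (k : ℝ)) fun _ => (1 : ℂ)) (P k))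
    (Z Zi : ℕ → OpSp p)
    (hZ : ∀ n : ℕ, 1 ≤ n → IsZOp p n (Z n)) (hZi : ∀ n : ℕ, 1 ≤ n → IsZInvOp p n (Zi n))
    (U : ℝ → OpSp p) (hU : ∀ s : ℝ, IsUOp p s (U s)) :
    Tendsto (fun n : ℕ => ‖U (-t) * Z n * K * Zi n * U t * P m‖) atTop (𝓝 0) := by
  rw [NormedAddCommGroup.tendsto_nhds_zero]
  intro ε hε
  filter_upwards [part2_core hp K hK m (half_pos hε), eventually_ge_atTop 1] with n hcore hn
  rw [Real.norm_eq_abs, abs_of_nonneg (norm_nonneg _)]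
  refine lt_of_le_of_lt (opNorm_le_of_unit (le_of_lt (half_pos hε)) ?_) (half_lt_self hε)
  intro u hu
  have happ : (U (-t) * Z n * K * Zi n * U t * P m) u
      = (U (-t)) ((Z n) (K ((Zi n) ((U t) ((P m) u))))) := rfl
  rw [happ]
  set w' := (Zi n) ((U t) ((P m) u)) with hw'
  have hw1 : ‖w'‖ ≤ 1 :=
    le_trans (norm_Zi_U_le hp hn (hZi n hn) (hU t) ((P m) u))
      (le_trans (norm_P_le (hP m) u) hu)
  have hw2 := support_Zi_U_P hp hn (hZi n hn) (hU t) (hP m) u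
  exact le_trans (norm_U_Z_le hp hn (hZ n hn) (hU (-t)) (K w')) (hcore w' hw1 hw2)

end Stmt8Aux

/-- for a compact operator `K` on `L^p(ℝ)`, `1 < p < ∞`, `t ∈ ℝ`, `m ∈ ℕ`,
`‖P_m U_{-t} Z_n K Z_n^{-1} U_t‖ → 0` and `‖U_{-t} Z_n K Z_n^{-1} U_t P_m‖ → 0` as `n → ∞`. -/
theorem stmt_8 (p : ℝ) (hp : 1 < p) [Fact (1 ≤ ENNReal.ofReal p)]
    (K : OpSp p) (hK : IsCompactOperator (K : LpSp p → LpSp p))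
    (t : ℝ) (m : ℕ)
    (P : ℕ → OpSp p)
    (hP : ∀ k : ℕ, IsMulOp p (Set.indicator (Set.Icc (-(k : ℝ)) (k : ℝ)) fun _ => (1 : ℂ)) (P k))
    (Z Zi : ℕ → OpSp p)
    (hZ : ∀ n : ℕ, 1 ≤ n → IsZOp p n (Z n)) (hZi : ∀ n : ℕ, 1 ≤ n → IsZInvOp p n (Zi n))
    (U : ℝ → OpSp p) (hU : ∀ s : ℝ, IsUOp p s (U s)) :
    Tendsto (fun n : ℕ => ‖P m * U (-t) * Z n * K * Zi n * U t‖) atTop (𝓝 0) ∧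
    Tendsto (fun n : ℕ => ‖U (-t) * Z n * K * Zi n * U t * P m‖) atTop (𝓝 0) := by
  exact ⟨Stmt8Aux.part1 hp K hK t m P hP Z Zi hZ hZi U hU,
    Stmt8Aux.part2 hp K hK t m P hP Z Zi hZ hZi U hU⟩
end
end

section
/- Let 1 ≤ p < ∞, let K be a P-compact operator on L^p(ℝ), and let t ∈ ℝ. Then for every u ∈ L^p(ℝ), ‖K (U_{−t} (Z_n u))‖_p → 0 as n → ∞. (In other words, the H^t-snapshot of the constant sequence {K} of a P-compact operator is zero.) -/
open MeasureTheory Filter Topology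
open scoped ENNReal

noncomputable section

lemma lintegral_comp_div_aux {H : ℝ → ℝ≥0∞} (hH : Measurable H) {n : ℝ} (hn : 0 < n) :
    ∫⁻ x, H (x / n) = ENNReal.ofReal n * ∫⁻ y, H y := by
  have h0 : (n⁻¹ : ℝ) ≠ 0 := inv_ne_zero hn.ne'
  have h1 : ∫⁻ y, H y ∂(Measure.map (· * n⁻¹) (volume : Measure ℝ))
      = ∫⁻ x, H (x * n⁻¹) := lintegral_map hH (measurable_mul_const _)
  simp only [div_eq_mul_inv]
  rw [← h1, Real.map_volume_mul_right h0, inv_inv, abs_of_pos hn,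
    lintegral_smul_measure, smul_eq_mul]

lemma const_pow_aux (p : ℝ) (hp : 1 ≤ p) (n : ℕ) (hn : 1 ≤ n) :
    ((‖((((n:ℝ) ^ (-1/p) : ℝ)) : ℂ)‖₊ : ℝ≥0∞)) ^ p = ENNReal.ofReal ((n:ℝ)⁻¹) := by
  have hp0 : (0:ℝ) < p := lt_of_lt_of_le one_pos hp
  have hn0 : (0:ℝ) < (n:ℝ) := by exact_mod_cast hn
  have hc0 : (0:ℝ) ≤ (n:ℝ) ^ (-1/p) := Real.rpow_nonneg hn0.le _
  have h1 : ((‖((((n:ℝ) ^ (-1/p) : ℝ)) : ℂ)‖₊ : ℝ≥0∞)) = ENNReal.ofReal ((n:ℝ) ^ (-1/p)) := by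
    rw [← enorm_eq_nnnorm, ← ofReal_norm, Complex.norm_real, Real.norm_eq_abs, abs_of_nonneg hc0]
  rw [h1, ENNReal.ofReal_rpow_of_nonneg hc0 hp0.le, ← Real.rpow_mul hn0.le,
    div_mul_cancel₀ _ hp0.ne', Real.rpow_neg_one]

lemma eLpNorm_formula (p : ℝ) (hp : 1 ≤ p) (f : ℝ → ℂ) :
    eLpNorm f (ENNReal.ofReal p) volume
      = (∫⁻ x, ((‖f x‖₊ : ℝ≥0∞)) ^ p) ^ (1/p) := by
  have hp0 : (0:ℝ) < p := lt_of_lt_of_le one_pos hp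
  rw [eLpNorm_eq_lintegral_rpow_enorm_toReal (ne_of_gt (ENNReal.ofReal_pos.2 hp0))
    ENNReal.ofReal_ne_top, ENNReal.toReal_ofReal hp0.le]
  rfl

lemma eLpNorm_dilation (p : ℝ) (hp : 1 ≤ p) {u : ℝ → ℂ} (hu : Measurable u)
    {n : ℕ} (hn : 1 ≤ n) :
    eLpNorm (fun x => ((((n:ℝ) ^ (-1/p) : ℝ)) : ℂ) * u (x / (n:ℝ))) (ENNReal.ofReal p) volume
      = eLpNorm u (ENNReal.ofReal p) volume := by
  have hp0 : (0:ℝ) < p := lt_of_lt_of_le one_pos hp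
  have hn0 : (0:ℝ) < (n:ℝ) := by exact_mod_cast hn
  set G : ℝ → ℝ≥0∞ := fun y => ((‖u y‖₊ : ℝ≥0∞)) ^ p with hGdef
  have hG : Measurable G :=
    (ENNReal.continuous_rpow_const (y := p)).measurable.comp hu.enorm
  rw [eLpNorm_formula p hp, eLpNorm_formula p hp]
  congr 1
  have hpt : ∀ x : ℝ, ((‖((((n:ℝ) ^ (-1/p) : ℝ)) : ℂ) * u (x / (n:ℝ))‖₊ : ℝ≥0∞)) ^ p
      = ((‖((((n:ℝ) ^ (-1/p) : ℝ)) : ℂ)‖₊ : ℝ≥0∞)) ^ p * G (x / (n:ℝ)) := by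
    intro x
    rw [nnnorm_mul, ENNReal.coe_mul, ENNReal.mul_rpow_of_nonneg _ _ hp0.le]
  simp_rw [hpt]
  have hGc : Measurable fun x : ℝ => G (x / (n:ℝ)) := hG.comp (measurable_id.div_const _)
  rw [lintegral_const_mul _ hGc,
    lintegral_comp_div_aux hG hn0, const_pow_aux p hp n hn, ← mul_assoc,
    ← ENNReal.ofReal_mul (by positivity), inv_mul_cancel₀ hn0.ne', ENNReal.ofReal_one, one_mul]

lemma eLpNorm_ind_dilation (p : ℝ) (hp : 1 ≤ p) {u : ℝ → ℂ} (hu : Measurable u)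
    {n : ℕ} (hn : 1 ≤ n) (m : ℕ) :
    eLpNorm (fun x => Set.indicator (Set.Icc (-(m:ℝ)) (m:ℝ)) (fun _ => (1:ℂ)) x *
        (((((n:ℝ) ^ (-1/p) : ℝ)) : ℂ) * u (x / (n:ℝ)))) (ENNReal.ofReal p) volume
      = (∫⁻ y, Set.indicator (Set.Icc (-((m:ℝ)/n)) ((m:ℝ)/n))
          (fun y => ((‖u y‖₊ : ℝ≥0∞)) ^ p) y) ^ (1/p) := by
  have hp0 : (0:ℝ) < p := lt_of_lt_of_le one_pos hp
  have hn0 : (0:ℝ) < (n:ℝ) := by exact_mod_cast hn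
  set G : ℝ → ℝ≥0∞ := fun y => ((‖u y‖₊ : ℝ≥0∞)) ^ p with hGdef
  have hG : Measurable G :=
    (ENNReal.continuous_rpow_const (y := p)).measurable.comp hu.enorm
  set C : ℝ≥0∞ := ((‖((((n:ℝ) ^ (-1/p) : ℝ)) : ℂ)‖₊ : ℝ≥0∞)) ^ p with hCdef
  set H : ℝ → ℝ≥0∞ := Set.indicator (Set.Icc (-((m:ℝ)/n)) ((m:ℝ)/n)) G with hHdef
  have hH : Measurable H := hG.indicator measurableSet_Icc
  rw [eLpNorm_formula p hp]
  congr 1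
  have hpt : ∀ x : ℝ, ((‖Set.indicator (Set.Icc (-(m:ℝ)) (m:ℝ)) (fun _ => (1:ℂ)) x *
      (((((n:ℝ) ^ (-1/p) : ℝ)) : ℂ) * u (x / (n:ℝ)))‖₊ : ℝ≥0∞)) ^ p
      = C * H (x / (n:ℝ)) := by
    intro x
    have hmem : x ∈ Set.Icc (-(m:ℝ)) (m:ℝ) ↔ x / (n:ℝ) ∈ Set.Icc (-((m:ℝ)/n)) ((m:ℝ)/n) := by
      rw [Set.mem_Icc, Set.mem_Icc, ← neg_div, div_le_div_iff_of_pos_right hn0, div_le_div_iff_of_pos_right hn0]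
    by_cases hx : x ∈ Set.Icc (-(m:ℝ)) (m:ℝ)
    · rw [Set.indicator_of_mem hx, one_mul, hHdef,
        Set.indicator_of_mem (hmem.mp hx), nnnorm_mul, ENNReal.coe_mul,
        ENNReal.mul_rpow_of_nonneg _ _ hp0.le]
    · rw [Set.indicator_of_notMem hx, zero_mul, nnnorm_zero, hHdef,
        Set.indicator_of_notMem (fun h => hx (hmem.mpr h))]
      simp [ENNReal.zero_rpow_of_pos hp0]
  simp_rw [hpt]
  have hHc : Measurable fun x : ℝ => H (x / (n:ℝ)) := hH.comp (measurable_id.div_const _)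
  rw [lintegral_const_mul _ hHc,
    lintegral_comp_div_aux hH hn0, hCdef, const_pow_aux p hp n hn, ← mul_assoc,
    ← ENNReal.ofReal_mul (by positivity), inv_mul_cancel₀ hn0.ne', ENNReal.ofReal_one, one_mul]

lemma tendsto_ind_lintegral {G : ℝ → ℝ≥0∞} (hG : Measurable G) (hGfin : ∫⁻ y, G y ≠ ∞)
    (m : ℕ) :
    Tendsto (fun n : ℕ => ∫⁻ y, Set.indicator (Set.Icc (-((m:ℝ)/n)) ((m:ℝ)/n)) G y)
      atTop (𝓝 0) := by
  have h0 : ∀ᵐ y : ℝ, y ≠ 0 := by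
    rw [ae_iff]
    simpa using measure_singleton (0 : ℝ)
  have := tendsto_lintegral_of_dominated_convergence
    (μ := (volume : Measure ℝ)) (f := fun _ => (0:ℝ≥0∞))
    (F := fun n : ℕ => Set.indicator (Set.Icc (-((m:ℝ)/n)) ((m:ℝ)/n)) G) G
    (fun n => hG.indicator measurableSet_Icc)
    (fun n => Filter.Eventually.of_forall fun y => Set.indicator_le_self _ _ _)
    hGfin ?_
  · simpa using this
  · filter_upwards [h0] with y hy
    have hlim : Tendsto (fun n : ℕ => (m:ℝ) / n) atTop (𝓝 0) :=
      tendsto_const_div_atTop_nhds_zero_nat _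
    have habs : ∀ᶠ n : ℕ in atTop, (m:ℝ) / n < |y| := by
      have : (0:ℝ) < |y| := abs_pos.mpr hy
      filter_upwards [hlim.eventually (gt_mem_nhds this)] with n hn
      exact hn
    refine Tendsto.congr' ?_ tendsto_const_nhds
    filter_upwards [habs] with n hn
    symm
    apply Set.indicator_of_notMem
    intro hmem
    rw [Set.mem_Icc] at hmem
    have : |y| ≤ (m:ℝ)/n := abs_le.mpr ⟨by linarith [hmem.1], hmem.2⟩
    linarith

lemma norm_exp_aux (s x : ℝ) : ‖Complex.exp (Complex.I * (s:ℂ) * (x:ℂ))‖ = 1 := by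
  have h : Complex.I * (s:ℂ) * (x:ℂ) = ((s*x : ℝ):ℂ) * Complex.I := by push_cast; ring
  rw [h, Complex.norm_exp_ofReal_mul_I]

set_option maxHeartbeats 1000000 in
/-- for a `P`-compact operator `K` on `L^p(ℝ)`, `1 ≤ p < ∞`, and `t ∈ ℝ`:
`‖K (U_{-t} (Z_n u))‖ → 0` for every `u ∈ L^p(ℝ)`; i.e. the `H^t`-snapshot of the constant
sequence `{K}` is zero. -/
theorem stmt_10 (p : ℝ) (hp : 1 ≤ p) [Fact (1 ≤ ENNReal.ofReal p)]
    (P : ℕ → OpSp p)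
    (hP : ∀ n : ℕ, IsMulOp p (Set.indicator (Set.Icc (-(n : ℝ)) (n : ℝ)) fun _ => (1 : ℂ)) (P n))
    (K : OpSp p)
    (hK1 : Tendsto (fun n : ℕ => ‖K * (1 - P n)‖) atTop (𝓝 0))
    (hK2 : Tendsto (fun n : ℕ => ‖(1 - P n) * K‖) atTop (𝓝 0))
    (t : ℝ) (U : ℝ → OpSp p) (hU : ∀ s : ℝ, IsUOp p s (U s))
    (Z : ℕ → OpSp p) (hZ : ∀ n : ℕ, 1 ≤ n → IsZOp p n (Z n)) :
    ∀ u : LpSp p, Tendsto (fun n : ℕ => ‖K ((U (-t)) ((Z n) u))‖) atTop (𝓝 0) := by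
  intro u
  have hp0 : (0:ℝ) < p := lt_of_lt_of_le one_pos hp
  set q := ENNReal.ofReal p with hqdef
  set uf : ℝ → ℂ := (u : ℝ → ℂ) with hufdef
  have huf : Measurable uf := (Lp.stronglyMeasurable u).measurable
  set G : ℝ → ℝ≥0∞ := fun y => ((‖uf y‖₊ : ℝ≥0∞)) ^ p with hGdef
  have hG : Measurable G :=
    (ENNReal.continuous_rpow_const (y := p)).measurable.comp huf.enorm
  have hGfin : ∫⁻ y, G y ≠ ∞ := by
    have h1 : eLpNorm uf q volume < ∞ := (Lp.memLp u).eLpNorm_lt_top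
    have h2 := lintegral_rpow_enorm_lt_top_of_eLpNorm_lt_top
      (ne_of_gt (ENNReal.ofReal_pos.2 hp0)) ENNReal.ofReal_ne_top h1
    rw [ENNReal.toReal_ofReal hp0.le] at h2
    exact h2.ne
  set v : ℕ → LpSp p := fun n => (U (-t)) ((Z n) u) with hvdef
  have hva : ∀ n : ℕ, 1 ≤ n → (v n : ℝ → ℂ) =ᵐ[volume]
      fun x : ℝ => Complex.exp (Complex.I * ((-t : ℝ):ℂ) * (x:ℂ)) *
        (((((n:ℝ) ^ (-1/p) : ℝ)) : ℂ) * uf (x / (n:ℝ))) := by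
    intro n hn
    refine ((hU (-t)) ((Z n) u)).trans ?_
    filter_upwards [(hZ n hn) u] with x hx
    rw [hx]
  have hnv : ∀ n : ℕ, 1 ≤ n → ‖v n‖ = ‖u‖ := by
    intro n hn
    rw [Lp.norm_def, Lp.norm_def]
    congr 1
    calc eLpNorm (v n : ℝ → ℂ) q volume
        = eLpNorm (fun x : ℝ => Complex.exp (Complex.I * ((-t:ℝ):ℂ) * (x:ℂ)) *
            (((((n:ℝ) ^ (-1/p) : ℝ)) : ℂ) * uf (x / (n:ℝ)))) q volume :=
          eLpNorm_congr_ae (hva n hn)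
      _ = eLpNorm (fun x : ℝ => (((((n:ℝ) ^ (-1/p) : ℝ)) : ℂ) * uf (x / (n:ℝ)))) q volume := by
          refine eLpNorm_congr_norm_ae (Filter.Eventually.of_forall fun x : ℝ => ?_)
          rw [norm_mul, norm_exp_aux, one_mul]
      _ = eLpNorm uf q volume := eLpNorm_dilation p hp huf hn
  have hPv : ∀ m : ℕ, ∀ n : ℕ, 1 ≤ n → ‖(P m) (v n)‖
      = ((∫⁻ y, Set.indicator (Set.Icc (-((m:ℝ)/n)) ((m:ℝ)/n)) G y) ^ (1/p)).toReal := by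
    intro m n hn
    rw [Lp.norm_def]
    congr 1
    have h3 : ((P m) (v n) : ℝ → ℂ) =ᵐ[volume]
        fun x : ℝ => Set.indicator (Set.Icc (-(m:ℝ)) (m:ℝ)) (fun _ => (1:ℂ)) x *
          (Complex.exp (Complex.I * ((-t:ℝ):ℂ) * (x:ℂ)) *
            (((((n:ℝ) ^ (-1/p) : ℝ)) : ℂ) * uf (x / (n:ℝ)))) := by
      refine (hP m (v n)).trans ?_
      filter_upwards [hva n hn] with x hx
      rw [hx]
    calc eLpNorm ((P m) (v n) : ℝ → ℂ) q volume
        = eLpNorm (fun x : ℝ => Set.indicator (Set.Icc (-(m:ℝ)) (m:ℝ)) (fun _ => (1:ℂ)) x *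
            (Complex.exp (Complex.I * ((-t:ℝ):ℂ) * (x:ℂ)) *
              (((((n:ℝ) ^ (-1/p) : ℝ)) : ℂ) * uf (x / (n:ℝ))))) q volume :=
          eLpNorm_congr_ae h3
      _ = eLpNorm (fun x : ℝ => Set.indicator (Set.Icc (-(m:ℝ)) (m:ℝ)) (fun _ => (1:ℂ)) x *
            (((((n:ℝ) ^ (-1/p) : ℝ)) : ℂ) * uf (x / (n:ℝ)))) q volume := by
          refine eLpNorm_congr_norm_ae (Filter.Eventually.of_forall fun x : ℝ => ?_)
          simp only [norm_mul, norm_exp_aux, one_mul]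
      _ = _ := eLpNorm_ind_dilation p hp huf hn m
  have hPlim : ∀ m : ℕ, Tendsto (fun n : ℕ => ‖(P m) (v n)‖) atTop (𝓝 0) := by
    intro m
    have hJ := tendsto_ind_lintegral hG hGfin m
    have h2 : Tendsto (fun n : ℕ =>
        (∫⁻ y, Set.indicator (Set.Icc (-((m:ℝ)/n)) ((m:ℝ)/n)) G y) ^ (1/p))
        atTop (𝓝 0) := by
      have hc := (ENNReal.continuous_rpow_const (y := 1/p)).tendsto 0
      have h0 : (0:ℝ≥0∞) ^ ((1:ℝ)/p) = 0 := ENNReal.zero_rpow_of_pos (by positivity)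
      have := hc.comp hJ
      rw [h0] at this
      exact this
    have h1 : Tendsto (fun n : ℕ =>
        ((∫⁻ y, Set.indicator (Set.Icc (-((m:ℝ)/n)) ((m:ℝ)/n)) G y) ^ (1/p)).toReal)
        atTop (𝓝 0) := by
      have h3 := (ENNReal.tendsto_toReal (by simp : (0:ℝ≥0∞) ≠ ∞)).comp h2
      simpa [Function.comp_def] using h3
    refine h1.congr' ?_
    filter_upwards [eventually_ge_atTop 1] with n hn
    exact (hPv m n hn).symm
  rw [Metric.tendsto_atTop]
  intro ε hε
  have hδ2 : (0:ℝ) < ε / (2 * (‖u‖ + 1)) := by positivity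
  obtain ⟨m, hm⟩ := (hK1.eventually (gt_mem_nhds hδ2)).exists
  have hδ1 : (0:ℝ) < ε / (2 * (‖K‖ + 1)) := by positivity
  obtain ⟨N, hN⟩ := (Metric.tendsto_atTop.mp (hPlim m)) _ hδ1
  refine ⟨max N 1, fun n hn => ?_⟩
  have hn1 : 1 ≤ n := le_trans (le_max_right _ _) hn
  have hnN : N ≤ n := le_trans (le_max_left _ _) hn
  have hPn : ‖(P m) (v n)‖ < ε / (2 * (‖K‖ + 1)) := by
    have := hN n hnN
    rwa [Real.dist_eq, sub_zero, abs_of_nonneg (norm_nonneg _)] at this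
  have hsplit : K (v n) = K ((P m) (v n)) + (K * (1 - P m)) (v n) := by
    have h4 : (K * (1 - P m)) (v n) = K (v n) - K ((P m) (v n)) := by
      simp [ContinuousLinearMap.mul_apply, ContinuousLinearMap.sub_apply,
        ContinuousLinearMap.one_apply, map_sub]
    rw [h4]
    abel
  have hb : ‖K (v n)‖ ≤ ‖K‖ * ‖(P m) (v n)‖ + ‖K * (1 - P m)‖ * ‖v n‖ := by
    rw [hsplit]
    exact le_trans (norm_add_le _ _)
      (add_le_add (K.le_opNorm _) ((K * (1 - P m)).le_opNorm _))
  have hK0 : (0:ℝ) ≤ ‖K‖ := norm_nonneg _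
  have hP0 : (0:ℝ) ≤ ‖(P m) (v n)‖ := norm_nonneg _
  have hu0 : (0:ℝ) ≤ ‖u‖ := norm_nonneg _
  have hC0 : (0:ℝ) ≤ ‖K * (1 - P m)‖ := norm_nonneg _
  have hPn' : ‖(P m) (v n)‖ * (2 * (‖K‖ + 1)) < ε :=
    (lt_div_iff₀ (by positivity)).mp hPn
  have hm' : ‖K * (1 - P m)‖ * (2 * (‖u‖ + 1)) < ε :=
    (lt_div_iff₀ (by positivity)).mp hm
  have hterm1 : ‖K‖ * ‖(P m) (v n)‖ < ε / 2 := by nlinarith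
  have hterm2 : ‖K * (1 - P m)‖ * ‖v n‖ < ε / 2 := by
    rw [hnv n hn1]
    nlinarith
  have hfin : ‖K (v n)‖ < ε := by linarith
  rw [Real.dist_eq, sub_zero, abs_of_nonneg (norm_nonneg _)]
  exact hfin
end
end
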